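/- Let (M_n)_{n≥0} be a martingale with M_0 = 0 and |M_n − M_{n−1}| ≤ c. Let Var_n = Σ_{k=1}^n E[(M_k − M_{k−1})² | F_{k−1}]. Then for any x, y > 0, P[∃n: M_n ≥ x and Var_n ≤ y] ≤ exp(−x²/(2(y + cx))). -/

import Mathlib

open MeasureTheory Finset

section FreedmanAux
open Nat

lemma freedman_exp_bound {u v : ℝ} (huv : |u| ≤ v) (hv1 : v < 1) :
    Real.exp u ≤ 1 + u + u ^ 2 / (2 * (1 - v)) := by
  have hv0 : 0 ≤ v := le_trans (abs_nonneg u) huv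
  have hsum : Summable (fun n : ℕ => u ^ n / n !) := Real.summable_pow_div_factorial u
  have hexp : Real.exp u = ∑' n : ℕ, u ^ n / n ! := by
    rw [Real.exp_eq_exp_ℝ, NormedSpace.exp_eq_tsum_div]
  have htail : Summable (fun n : ℕ => u ^ (n + 2) / (n + 2)!) := by
    exact (summable_nat_add_iff 2).2 hsum
  have hgeo : Summable (fun n : ℕ => u ^ 2 / 2 * v ^ n) :=
    (summable_geometric_of_lt_one hv0 hv1).mul_left _
  have hterm : ∀ n : ℕ, u ^ (n + 2) / (n + 2)! ≤ u ^ 2 / 2 * v ^ n := by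
    intro n
    have h1 : u ^ (n + 2) / (n + 2)! ≤ |u| ^ (n + 2) / (n + 2)! := by
      have : u ^ (n + 2) ≤ |u| ^ (n + 2) := by
        calc u ^ (n + 2) ≤ |u ^ (n + 2)| := le_abs_self _
          _ = |u| ^ (n + 2) := abs_pow u (n + 2)
      gcongr
    have h2 : |u| ^ (n + 2) / (n + 2)! ≤ |u| ^ (n + 2) / 2 := by
      have h2' : (2:ℝ) ≤ (n + 2)! := by
        exact_mod_cast Nat.succ_le_of_lt (Nat.one_lt_factorial.2 (by omega))
      gcongr
    have h3 : |u| ^ (n + 2) / 2 ≤ u ^ 2 / 2 * v ^ n := by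
      rw [pow_add, sq_abs]
      rw [div_le_iff₀ (by norm_num : (0:ℝ) < 2)] at *
      ring_nf
      nlinarith [pow_le_pow_left₀ (abs_nonneg u) huv n, sq_nonneg u, pow_nonneg hv0 n]
    linarith
  have key : ∑' n : ℕ, u ^ (n + 2) / (n + 2)! ≤ u ^ 2 / (2 * (1 - v)) := by
    calc ∑' n : ℕ, u ^ (n + 2) / (n + 2)! ≤ ∑' n : ℕ, u ^ 2 / 2 * v ^ n :=
          Summable.tsum_le_tsum hterm htail hgeo
      _ = u ^ 2 / 2 * (1 - v)⁻¹ := by rw [tsum_mul_left, tsum_geometric_of_lt_one hv0 hv1]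
      _ = u ^ 2 / (2 * (1 - v)) := by
          have h1v : (1 : ℝ) - v ≠ 0 := by linarith
          field_simp
  have hsplit := Summable.sum_add_tsum_nat_add 2 hsum
  rw [hexp, ← hsplit]
  have : ∑ i ∈ range 2, u ^ i / i ! = 1 + u := by
    simp [Finset.sum_range_succ]
  rw [this]
  push_cast at key ⊢
  linarith

end FreedmanAux


lemma supermartingale_maximal {Ω : Type*} {m0 : MeasurableSpace Ω} {μ : Measure Ω}
    [IsProbabilityMeasure μ] {ℱ : Filtration ℕ m0} {Z : ℕ → Ω → ℝ}
    (hZ : Supermartingale Z ℱ μ) (hpos : ∀ n ω, 0 ≤ Z n ω) {a : ℝ} (ha : 0 < a) (n : ℕ) :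
    ENNReal.ofReal a * μ {ω | ∃ k ≤ n, a ≤ Z k ω} ≤ ENNReal.ofReal (∫ ω, Z 0 ω ∂μ) := by
  classical
  set τ : Ω → WithTop ℕ := fun ω => ((hittingBtwn Z (Set.Ici a) 0 n ω : ℕ) : WithTop ℕ) with hτdef
  have hτ : IsStoppingTime ℱ τ := Adapted.isStoppingTime_hittingBtwn hZ.stronglyAdapted.adapted measurableSet_Ici
  have hτle : ∀ ω, τ ω ≤ n := fun ω => WithTop.coe_le_coe.2 (hittingBtwn_le ω)
  have hint : Integrable (stoppedValue Z τ) μ := by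
    have := hZ.neg.integrable_stoppedValue hτ hτle
    have heq : stoppedValue (-Z) τ = -(stoppedValue Z τ) := rfl
    rw [heq] at this
    simpa using this.neg
  have hZmeas : ∀ k, StronglyMeasurable (Z k) :=
    fun k => (hZ.stronglyAdapted k).mono (ℱ.le k)
  have hSmeas : MeasurableSet {ω | ∃ k ≤ n, a ≤ Z k ω} := by
    have : {ω | ∃ k ≤ n, a ≤ Z k ω} = ⋃ k ∈ Set.Iic n, {ω | a ≤ Z k ω} := by
      ext ω; simp [Set.mem_iUnion]
    rw [this]
    exact MeasurableSet.biUnion (Set.to_countable _)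
      (fun k _ => measurableSet_le measurable_const (hZmeas k).measurable)
  have hstop : ∀ ω ∈ {ω | ∃ k ≤ n, a ≤ Z k ω}, a ≤ stoppedValue Z τ ω := by
    intro ω hω
    obtain ⟨k, hk, hak⟩ := hω
    exact stoppedValue_hittingBtwn_mem ⟨k, ⟨Nat.zero_le _, hk⟩, hak⟩
  have h1 : a * (μ {ω | ∃ k ≤ n, a ≤ Z k ω}).toReal ≤
      ∫ ω in {ω | ∃ k ≤ n, a ≤ Z k ω}, stoppedValue Z τ ω ∂μ :=
    setIntegral_ge_of_const_le_real hSmeas (measure_ne_top _ _) hstop hint.integrableOn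
  have h2 : ∫ ω in {ω | ∃ k ≤ n, a ≤ Z k ω}, stoppedValue Z τ ω ∂μ ≤
      ∫ ω, stoppedValue Z τ ω ∂μ :=
    setIntegral_le_integral hint (Filter.Eventually.of_forall fun ω => hpos _ ω)
  have h3 : ∫ ω, stoppedValue Z τ ω ∂μ ≤ ∫ ω, Z 0 ω ∂μ := by
    have := hZ.neg.expected_stoppedValue_mono (isStoppingTime_const ℱ 0) hτ
      (fun ω => WithTop.coe_le_coe.2 (Nat.zero_le _)) hτle
    have heq : stoppedValue (-Z) τ = -(stoppedValue Z τ) := rfl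
    have heq0 : stoppedValue (-Z) (fun _ => ((0:ℕ) : WithTop ℕ)) = -(Z 0) := rfl
    rw [heq] at this; change ∫ x, (-(Z 0)) x ∂μ ≤ _ at this
    simp only [Pi.neg_apply] at this
    rw [integral_neg, integral_neg, neg_le_neg_iff] at this
    exact this
  calc ENNReal.ofReal a * μ {ω | ∃ k ≤ n, a ≤ Z k ω}
      = ENNReal.ofReal (a * (μ {ω | ∃ k ≤ n, a ≤ Z k ω}).toReal) := by
        rw [ENNReal.ofReal_mul ha.le, ENNReal.ofReal_toReal (measure_ne_top _ _)]
    _ ≤ ENNReal.ofReal (∫ ω, Z 0 ω ∂μ) :=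
        ENNReal.ofReal_le_ofReal (by linarith)

/-- Freedman's inequality (anytime version): for a martingale `M` with `M 0 = 0` and
increments bounded by `c`, the probability that at some time `n` the martingale exceeds
`x` while its predictable quadratic variation is at most `y` is bounded by
`exp(-x²/(2(y + cx)))`. -/
theorem stmt19 {Ω : Type*} {m0 : MeasurableSpace Ω} {μ : Measure Ω}
    [IsProbabilityMeasure μ] (ℱ : Filtration ℕ m0)
    (M : ℕ → Ω → ℝ) (hM : Martingale M ℱ μ)
    (c : ℝ) (hc : 0 < c)
    (hbdd : ∀ n ω, |M (n + 1) ω - M n ω| ≤ c)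
    (hM0 : ∀ ω, M 0 ω = 0)
    (x y : ℝ) (hx : 0 < x) (hy : 0 < y) :
    μ {ω | ∃ n, x ≤ M n ω ∧
        ∑ k ∈ range n, (μ[fun ω' => (M (k + 1) ω' - M k ω') ^ 2 | ℱ k]) ω ≤ y}
      ≤ ENNReal.ofReal (Real.exp (-(x ^ 2) / (2 * (y + c * x)))) := by
  classical
  have hycx : 0 < y + c * x := by positivity
  set l : ℝ := x / (y + c * x) with hld
  have hlpos : 0 < l := by positivity
  have hlc : l * c < 1 := by
    rw [hld, div_mul_eq_mul_div, div_lt_one hycx]; nlinarith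
  have hlc0 : 0 < 1 - l * c := by linarith
  set h : ℝ := l ^ 2 / (2 * (1 - l * c)) with hhd
  have hhpos : 0 < h := by positivity
  set Q : ℕ → Ω → ℝ := fun k => μ[fun ω' => (M (k + 1) ω' - M k ω') ^ 2 | ℱ k] with hQd
  set V : ℕ → Ω → ℝ := fun n ω => ∑ k ∈ range n, Q k ω with hVd
  set Z : ℕ → Ω → ℝ := fun n ω => Real.exp (l * M n ω - h * V n ω) with hZd
  -- basic facts
  have hMadp : ∀ n, StronglyMeasurable[ℱ n] (M n) := hM.stronglyAdapted
  have hMint := hM.integrable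
  have hQmeas : ∀ k, StronglyMeasurable[ℱ k] (Q k) := fun k => stronglyMeasurable_condExp
  have hQnonneg : ∀ k, 0 ≤ᵐ[μ] Q k := fun k =>
    condExp_nonneg (Filter.Eventually.of_forall fun ω => sq_nonneg _)
  have hMbound : ∀ n ω, |M n ω| ≤ n * c := by
    intro n
    induction n with
    | zero => intro ω; simp [hM0 ω]
    | succ n ih =>
      intro ω
      calc |M (n + 1) ω| = |M n ω + (M (n + 1) ω - M n ω)| := by ring_nf
        _ ≤ |M n ω| + |M (n + 1) ω - M n ω| := abs_add_le _ _
        _ ≤ n * c + c := add_le_add (ih ω) (hbdd n ω)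
        _ = (n + 1 : ℕ) * c := by push_cast; ring
  have hVmeas : ∀ n j, n ≤ j + 1 → StronglyMeasurable[ℱ j] (V n) := by
    intro n j hnj
    have hVeq : V n = ∑ k ∈ range n, Q k := by
      funext ω; rw [hVd]; simp
    rw [hVeq]
    refine Finset.stronglyMeasurable_sum _ fun k hk => ?_
    exact (hQmeas k).mono (ℱ.mono (by simp only [Finset.mem_range] at hk; omega))
  have hZadp : StronglyAdapted ℱ Z := fun n =>
    Real.continuous_exp.comp_stronglyMeasurable
      (((hMadp n).const_mul l).sub ((hVmeas n n (by omega)).const_mul h))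
  have hVnonneg : ∀ n, ∀ᵐ ω ∂μ, 0 ≤ V n ω := by
    intro n
    filter_upwards [ae_all_iff.2 hQnonneg] with ω hω
    exact Finset.sum_nonneg fun k _ => hω k
  have hZint : ∀ n, Integrable (Z n) μ := by
    intro n
    refine (integrable_const (Real.exp (l * (n * c)))).mono'
      ((hZadp n).mono (ℱ.le n)).aestronglyMeasurable ?_
    filter_upwards [hVnonneg n] with ω hω
    rw [Real.norm_eq_abs, Real.abs_exp]
    apply Real.exp_le_exp.2
    have h1 := (abs_le.1 (hMbound n ω)).2
    nlinarith [mul_le_mul_of_nonneg_left h1 hlpos.le, mul_nonneg hhpos.le hω]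
  have hDint : ∀ i, Integrable (fun ω => M (i + 1) ω - M i ω) μ :=
    fun i => (hMint _).sub (hMint _)
  have hDmeas : ∀ i, AEStronglyMeasurable (fun ω => M (i + 1) ω - M i ω) μ :=
    fun i => (((hMadp (i + 1)).mono (ℱ.le _)).sub ((hMadp i).mono (ℱ.le _))).aestronglyMeasurable
  have hD2int : ∀ i, Integrable (fun ω => (M (i + 1) ω - M i ω) ^ 2) μ := by
    intro i
    refine (integrable_const (c ^ 2)).mono'
      ((((hMadp (i + 1)).mono (ℱ.le _)).sub ((hMadp i).mono (ℱ.le _))).pow 2).aestronglyMeasurable ?_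
    filter_upwards with ω
    rw [Real.norm_eq_abs, abs_of_nonneg (sq_nonneg _)]
    nlinarith [abs_le.1 (hbdd i ω)]
  have hcondD : ∀ i, μ[fun ω => M (i + 1) ω - M i ω | ℱ i] =ᵐ[μ] 0 := by
    intro i
    have h1 : μ[fun ω => M (i + 1) ω - M i ω | ℱ i] =ᵐ[μ] μ[M (i + 1)|ℱ i] - μ[M i|ℱ i] :=
      condExp_sub (hMint (i + 1)) (hMint i) _
    have h2 := hM.condExp_ae_eq (Nat.le_succ i)
    have h3 : μ[M i|ℱ i] = M i := condExp_of_stronglyMeasurable (ℱ.le i) (hMadp i) (hMint i)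
    filter_upwards [h1, h2] with ω hω1 hω2
    simp only [Pi.sub_apply, Pi.zero_apply] at *
    rw [hω1, hω2, h3, sub_self]
  -- supermartingale property
  have hsuper : Supermartingale Z ℱ μ := by
    refine supermartingale_nat hZadp hZint fun i => ?_
    have hGint : Integrable (fun ω => Real.exp (l * (M (i + 1) ω - M i ω))) μ := by
      refine (integrable_const (Real.exp (l * c))).mono'
        (Real.continuous_exp.comp_stronglyMeasurable
          ((((hMadp (i + 1)).mono (ℱ.le _)).sub ((hMadp i).mono (ℱ.le _))).const_mul l)).aestronglyMeasurable ?_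
      filter_upwards with ω
      rw [Real.norm_eq_abs, Real.abs_exp]
      exact Real.exp_le_exp.2 (mul_le_mul_of_nonneg_left ((abs_le.1 (hbdd i ω)).2) hlpos.le)
    have hAmeas : StronglyMeasurable[ℱ i] (fun ω => Real.exp (l * M i ω - h * V (i + 1) ω)) :=
      Real.continuous_exp.comp_stronglyMeasurable
        (((hMadp i).const_mul l).sub ((hVmeas (i + 1) i le_rfl).const_mul h))
    have hAbound : ∀ᵐ ω ∂μ, ‖Real.exp (l * M i ω - h * V (i + 1) ω)‖ ≤ Real.exp (l * (i * c)) := by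
      filter_upwards [hVnonneg (i + 1)] with ω hω
      rw [Real.norm_eq_abs, Real.abs_exp]
      apply Real.exp_le_exp.2
      have h1 := (abs_le.1 (hMbound i ω)).2
      nlinarith [mul_le_mul_of_nonneg_left h1 hlpos.le, mul_nonneg hhpos.le hω]
    have hZAG : Z (i + 1) = (fun ω => Real.exp (l * M i ω - h * V (i + 1) ω)) *
        (fun ω => Real.exp (l * (M (i + 1) ω - M i ω))) := by
      funext ω
      simp only [hZd, Pi.mul_apply]
      rw [← Real.exp_add]
      ring_nf
    have hpull : μ[Z (i + 1)|ℱ i] =ᵐ[μ] (fun ω => Real.exp (l * M i ω - h * V (i + 1) ω)) *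
        μ[fun ω => Real.exp (l * (M (i + 1) ω - M i ω))|ℱ i] := by
      rw [hZAG]
      exact condExp_stronglyMeasurable_mul_of_bound (ℱ.le i) hAmeas hGint _ hAbound
    -- bound the conditional Laplace transform
    have hBint : Integrable (fun ω => 1 + l * (M (i + 1) ω - M i ω)
        + h * (M (i + 1) ω - M i ω) ^ 2) μ := by
      exact ((integrable_const (1 : ℝ)).add ((hDint i).const_mul l)).add ((hD2int i).const_mul h)
    have hGleB : ∀ ω, Real.exp (l * (M (i + 1) ω - M i ω)) ≤
        1 + l * (M (i + 1) ω - M i ω) + h * (M (i + 1) ω - M i ω) ^ 2 := by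
      intro ω
      have hu : |l * (M (i + 1) ω - M i ω)| ≤ l * c := by
        rw [abs_mul, abs_of_pos hlpos]
        exact mul_le_mul_of_nonneg_left (hbdd i ω) hlpos.le
      have := freedman_exp_bound hu hlc
      have heq : (l * (M (i + 1) ω - M i ω)) ^ 2 / (2 * (1 - l * c))
          = h * (M (i + 1) ω - M i ω) ^ 2 := by
        rw [hhd, mul_pow]
        field_simp
      rw [heq] at this
      linarith
    have hcondB : μ[fun ω => 1 + l * (M (i + 1) ω - M i ω)
        + h * (M (i + 1) ω - M i ω) ^ 2|ℱ i] =ᵐ[μ] fun ω => 1 + h * Q i ω := by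
      have e1 : (fun ω => 1 + l * (M (i + 1) ω - M i ω) + h * (M (i + 1) ω - M i ω) ^ 2)
          = (fun _ : Ω => (1 : ℝ)) + (l • fun ω => M (i + 1) ω - M i ω)
            + (h • fun ω => (M (i + 1) ω - M i ω) ^ 2) := by
        funext ω; simp [Pi.add_apply]
      rw [e1]
      have h1 := condExp_add (μ := μ) (m := ℱ i)
        ((integrable_const (1 : ℝ)).add ((hDint i).smul l)) ((hD2int i).smul h)
      have h2 := condExp_add (μ := μ) (m := ℱ i) (integrable_const (1 : ℝ)) ((hDint i).smul l)
      have h3 := condExp_smul (μ := μ) (m := ℱ i) l (fun ω => M (i + 1) ω - M i ω)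
      have h4 := condExp_smul (μ := μ) (m := ℱ i) h (fun ω => (M (i + 1) ω - M i ω) ^ 2)
      have h5 : μ[fun _ : Ω => (1 : ℝ)|ℱ i] = fun _ => (1 : ℝ) := condExp_const (ℱ.le i) 1
      filter_upwards [h1, h2, h3, h4, hcondD i] with ω hω1 hω2 hω3 hω4 hω5
      simp only [Pi.add_apply, Pi.smul_apply, smul_eq_mul] at *
      rw [hω1, hω2, hω3, hω4, h5, hω5]
      simp [hQd]
    have hcondG : μ[fun ω => Real.exp (l * (M (i + 1) ω - M i ω))|ℱ i] ≤ᵐ[μ]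
        fun ω => 1 + h * Q i ω := by
      have := condExp_mono hGint hBint (Filter.Eventually.of_forall hGleB) (m := ℱ i)
      exact this.trans hcondB.le
    -- combine
    filter_upwards [hpull, hcondG] with ω hω1 hω2
    simp only [Pi.mul_apply] at hω1
    rw [hω1]
    have hA : (0:ℝ) ≤ Real.exp (l * M i ω - h * V (i + 1) ω) := (Real.exp_pos _).le
    calc Real.exp (l * M i ω - h * V (i + 1) ω)
          * (μ[fun ω => Real.exp (l * (M (i + 1) ω - M i ω))|ℱ i]) ω
        ≤ Real.exp (l * M i ω - h * V (i + 1) ω) * (1 + h * Q i ω) :=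
          mul_le_mul_of_nonneg_left hω2 hA
      _ ≤ Real.exp (l * M i ω - h * V (i + 1) ω) * Real.exp (h * Q i ω) := by
          refine mul_le_mul_of_nonneg_left ?_ hA
          have := Real.add_one_le_exp (h * Q i ω)
          linarith
      _ = Z i ω := by
          rw [← Real.exp_add, hZd]
          congr 1
          have : V (i + 1) ω = V i ω + Q i ω := by
            simp [hVd, Finset.sum_range_succ]
          rw [this]; ring
  -- maximal inequality and conclusion
  set a : ℝ := Real.exp (l * x - h * y) with had
  have hapos : 0 < a := Real.exp_pos _
  have hlc1 : 1 - l * c = y / (y + c * x) := by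
    rw [hld]; field_simp; ring
  have hh2 : h = x ^ 2 / (2 * y * (y + c * x)) := by
    rw [hhd, hlc1, hld]
    field_simp
  have hkey : -(x ^ 2) / (2 * (y + c * x)) = -(l * x - h * y) := by
    rw [hh2, hld]
    field_simp
    ring
  have hbound : ∀ n, μ {ω | ∃ k ≤ n, a ≤ Z k ω}
      ≤ ENNReal.ofReal (Real.exp (-(x ^ 2) / (2 * (y + c * x)))) := by
    intro n
    have hmax := supermartingale_maximal hsuper (fun n ω => (Real.exp_pos _).le) hapos n
    have hZ0 : ∫ ω, Z 0 ω ∂μ = 1 := by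
      have : Z 0 = fun _ => 1 := by
        funext ω; simp [hZd, hM0 ω, hVd]
      rw [this]; simp
    rw [hZ0, ENNReal.ofReal_one] at hmax
    have h1 : μ {ω | ∃ k ≤ n, a ≤ Z k ω} ≤ (ENNReal.ofReal a)⁻¹ := by
      have hane : ENNReal.ofReal a ≠ 0 := by simp [hapos]
      calc μ {ω | ∃ k ≤ n, a ≤ Z k ω}
          = (ENNReal.ofReal a)⁻¹ * (ENNReal.ofReal a * μ {ω | ∃ k ≤ n, a ≤ Z k ω}) := by
            rw [← mul_assoc, ENNReal.inv_mul_cancel hane ENNReal.ofReal_ne_top, one_mul]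
        _ ≤ (ENNReal.ofReal a)⁻¹ * 1 := mul_le_mul_right hmax _
        _ = (ENNReal.ofReal a)⁻¹ := mul_one _
    have h2 : (ENNReal.ofReal a)⁻¹ = ENNReal.ofReal (Real.exp (-(x ^ 2) / (2 * (y + c * x)))) := by
      rw [← ENNReal.ofReal_inv_of_pos hapos, had, ← Real.exp_neg, hkey]
    rw [← h2]; exact h1
  have hsub : {ω | ∃ n, x ≤ M n ω ∧
        ∑ k ∈ range n, (μ[fun ω' => (M (k + 1) ω' - M k ω') ^ 2 | ℱ k]) ω ≤ y}
      ⊆ ⋃ n, {ω | ∃ k ≤ n, a ≤ Z k ω} := by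
    intro ω hω
    obtain ⟨n, hxM, hVy⟩ := hω
    have hVy' : V n ω ≤ y := hVy
    refine Set.mem_iUnion.2 ⟨n, n, le_rfl, ?_⟩
    rw [had, hZd]
    apply Real.exp_le_exp.2
    nlinarith [mul_le_mul_of_nonneg_left hxM hlpos.le, mul_le_mul_of_nonneg_left hVy' hhpos.le]
  calc μ {ω | ∃ n, x ≤ M n ω ∧
        ∑ k ∈ range n, (μ[fun ω' => (M (k + 1) ω' - M k ω') ^ 2 | ℱ k]) ω ≤ y}
      ≤ μ (⋃ n, {ω | ∃ k ≤ n, a ≤ Z k ω}) := measure_mono hsub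
    _ = ⨆ n, μ {ω | ∃ k ≤ n, a ≤ Z k ω} := by
        refine Monotone.measure_iUnion fun m n hmn ω hω => ?_
        obtain ⟨k, hk, hak⟩ := hω
        exact ⟨k, hk.trans hmn, hak⟩
    _ ≤ ENNReal.ofReal (Real.exp (-(x ^ 2) / (2 * (y + c * x)))) := iSup_le hbound
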